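/- Fix m ≥ 1 and let f : ℤ → ℚ be defined by f(−1) = 1/3, f(0) = 1, f(1) = 4, and f(k) = 4f(k−1) − f(k−2) + 3f(k−3) for k ≥ 2. Let c = c_{m−1} ... c_0 be a codeword of NSC(m), with symbols viewed as natural numbers in {0,1,2,3}. For 0 ≤ i ≤ m−1 define y_{i,1} = 1 if i+1 ≤ m−1, c_{i+1} = 3, and c_i ∈ {1,2,3}, and y_{i,1} = 0 otherwise. Then the lexicographic index g(c) of c in NSC(m) satisfies, as an equality of rational numbers, g(c) = Σ_{i=0}^{m−1} [ (c_i − y_{i,1}) · f(i) + 3 y_{i,1} · f(i−1) ]. -/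

import Mathlib

/-- The NS-LOCO code: words of length `m` over the alphabet `{0,1,2,3}`
(position `m-1` most significant) containing no contiguous subword `3 0 3`. -/
def NSC (m : ℕ) : Set (Fin m → Fin 4) :=
  {c | ∀ i : ℕ, ∀ h : i + 2 < m,
      ¬(c ⟨i + 2, h⟩ = 3 ∧ c ⟨i + 1, by omega⟩ = 0 ∧ c ⟨i, by omega⟩ = 3)}

/-- `w` is lexicographically smaller than `c` (position `m-1` most significant):
at the most significant position where they differ, `w` has the smaller symbol. -/
def wordLT {m q : ℕ} (w c : Fin m → Fin q) : Prop :=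
  ∃ k : Fin m, w k < c k ∧ ∀ j : Fin m, k < j → w j = c j

/-- The lexicographic index of `c` in the code `C`: the number of codewords of
`C` lexicographically smaller than `c`. -/
noncomputable def lexIndex {m q : ℕ} (C : Set (Fin m → Fin q)) (c : Fin m → Fin q) : ℕ :=
  {w ∈ C | wordLT w c}.ncard

/-- The natural-number value of symbol `c_i`, with an out-of-alphabet default
for out-of-range indices. -/
def extVal {m q : ℕ} (c : Fin m → Fin q) (i : ℕ) : ℕ :=
  if h : i < m then (c ⟨i, h⟩ : ℕ) else q

/-- `y_{i,1} = 1` iff `i+1 ≤ m-1`, `c_{i+1} = 3`, and `c_i ∈ {1,2,3}`. -/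
def nsY1 {m : ℕ} (c : Fin m → Fin 4) (i : ℕ) : ℚ :=
  if i + 1 < m ∧ extVal c (i + 1) = 3 ∧ extVal c i ∈ ({1, 2, 3} : Finset ℕ) then 1 else 0

open Finset
open scoped Classical

namespace NSAux

lemma extVal_lt {m q : ℕ} (c : Fin m → Fin q) (i : ℕ) (h : i < m) :
    extVal c i = (c ⟨i, h⟩ : ℕ) := dif_pos h

lemma extVal_ge {m q : ℕ} (c : Fin m → Fin q) (i : ℕ) (h : ¬ i < m) :
    extVal c i = q := dif_neg h

lemma extVal_lt_of_ne {m : ℕ} (c : Fin m → Fin 4) (i : ℕ) (h : extVal c i ≠ 4) : i < m := by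
  by_contra hb; exact h (extVal_ge c i hb)

lemma fin4_eq_iff (a : Fin 4) (n : ℕ) (hn : n < 4) : a = (⟨n, hn⟩ : Fin 4) ↔ (a : ℕ) = n := by
  constructor
  · rintro rfl; rfl
  · intro h; exact Fin.ext h

lemma mem_NSC_iff_ext {m : ℕ} (c : Fin m → Fin 4) :
    c ∈ NSC m ↔ ∀ i : ℕ, ¬(extVal c (i+2) = 3 ∧ extVal c (i+1) = 0 ∧ extVal c i = 3) := by
  constructor
  · intro hc i ⟨h2, h1, h0⟩
    have hi2 : i + 2 < m := extVal_lt_of_ne c (i+2) (by omega)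
    have e2 := extVal_lt c (i+2) hi2
    have e1 := extVal_lt c (i+1) (by omega)
    have e0 := extVal_lt c i (by omega)
    exact hc i hi2 ⟨Fin.ext (by omega), Fin.ext (by simp; omega), Fin.ext (by omega)⟩
  · intro hc i h ⟨h2, h1, h0⟩
    refine hc i ⟨?_, ?_, ?_⟩
    · rw [extVal_lt c (i+2) h, h2]; rfl
    · rw [extVal_lt c (i+1) (by omega), h1]; rfl
    · rw [extVal_lt c i (by omega), h0]; rfl

lemma extVal_snoc {k : ℕ} (s : Fin k → Fin 4) (a : Fin 4) (i : ℕ) :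
    extVal (Fin.snoc s a : Fin (k+1) → Fin 4) i = if i = k then (a : ℕ) else extVal s i := by
  rcases lt_trichotomy i k with h | h | h
  · rw [if_neg (by omega), extVal_lt _ i (by omega), extVal_lt _ i h]
    have : (⟨i, by omega⟩ : Fin (k+1)) = Fin.castSucc ⟨i, h⟩ := rfl
    rw [this, Fin.snoc_castSucc]
  · subst h
    rw [if_pos rfl, extVal_lt _ i (by omega)]
    have : (⟨i, by omega⟩ : Fin (i+1)) = Fin.last i := rfl
    rw [this, Fin.snoc_last]
  · rw [if_neg (by omega), extVal_ge _ i (by omega), extVal_ge _ i (by omega)]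

lemma snoc_mem_NSC {k : ℕ} (s : Fin k → Fin 4) (a : Fin 4) :
    (Fin.snoc s a : Fin (k+1) → Fin 4) ∈ NSC (k+1) ↔
      s ∈ NSC k ∧ ¬((a : ℕ) = 3 ∧ extVal s (k-1) = 0 ∧ extVal s (k-2) = 3) := by
  rw [mem_NSC_iff_ext, mem_NSC_iff_ext]
  constructor
  · intro H
    constructor
    · intro i ⟨h2, h1, h0⟩
      have hi2 : i + 2 < k := extVal_lt_of_ne s (i+2) (by omega)
      refine H i ⟨?_, ?_, ?_⟩ <;>
        rw [extVal_snoc] <;> rw [if_neg (by omega)] <;> assumption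
    · intro ⟨ha, h1, h0⟩
      have hk2 : k - 2 < k := extVal_lt_of_ne s (k-2) (by omega)
      have hk : 2 ≤ k := by
        rcases Nat.lt_or_ge k 2 with h | h
        · interval_cases k
          · omega
          · have : (1:ℕ) - 1 = 1 - 2 := rfl
            rw [this] at h1; omega
        · exact h
      refine H (k-2) ⟨?_, ?_, ?_⟩
      · rw [extVal_snoc, if_pos (by omega)]; exact ha
      · rw [extVal_snoc, if_neg (by omega)]
        have : k - 2 + 1 = k - 1 := by omega
        rw [this]; exact h1
      · rw [extVal_snoc, if_neg (by omega)]; exact h0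
  · intro ⟨Hs, Hb⟩ i ⟨h2, h1, h0⟩
    rw [extVal_snoc] at h2 h1 h0
    rcases lt_trichotomy (i+2) k with h | h | h
    · rw [if_neg (by omega)] at h2 h1 h0
      exact Hs i ⟨h2, h1, h0⟩
    · rw [if_pos (by omega)] at h2
      rw [if_neg (by omega)] at h1 h0
      refine Hb ⟨h2, ?_, ?_⟩
      · have : k - 1 = i + 1 := by omega
        rw [this]; exact h1
      · have : k - 2 = i := by omega
        rw [this]; exact h0
    · rcases Nat.lt_or_ge (i+1) k with h' | h'
      · omega
      rcases eq_or_ne (i+1) k with h'' | h''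
      · rw [if_neg (by omega)] at h2
        rw [extVal_ge _ _ (by omega)] at h2
        omega
      · rcases eq_or_ne i k with h3 | h3
        · rw [if_neg (by omega)] at h1
          rw [extVal_ge _ _ (by omega)] at h1
          omega
        · rw [if_neg h3] at h0
          rw [extVal_ge _ _ (by omega)] at h0
          omega

end NSAux

namespace NSAux

noncomputable def Af (k : ℕ) : Finset (Fin k → Fin 4) := univ.filter (· ∈ NSC k)

noncomputable def Bf (k : ℕ) : Finset (Fin k → Fin 4) :=
  univ.filter (fun t => t ∈ NSC k ∧ ¬(extVal t (k-1) = 0 ∧ extVal t (k-2) = 3))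

noncomputable def Ef (k : ℕ) : Finset (Fin k → Fin 4) :=
  univ.filter (fun t => t ∈ NSC k ∧ extVal t (k-1) ≠ 3)

lemma card_filter_snoc {k : ℕ} (P : (Fin (k+1) → Fin 4) → Prop) [DecidablePred P] :
    (univ.filter P).card
      = ∑ a : Fin 4, (univ.filter (fun s : Fin k → Fin 4 => P (Fin.snoc s a))).card := by
  rw [Finset.card_filter]
  rw [← Equiv.sum_comp (Fin.snocEquiv (fun _ => Fin 4))
      (fun w : Fin (k+1) → Fin 4 => if P w then 1 else 0)]
  rw [Fintype.sum_prod_type]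
  refine Finset.sum_congr rfl fun a _ => ?_
  rw [Finset.card_filter]
  rfl

lemma mem_NSC_zero (t : Fin 0 → Fin 4) : t ∈ NSC 0 := by
  intro i h; omega

lemma mem_NSC_one (t : Fin 1 → Fin 4) : t ∈ NSC 1 := by
  intro i h; omega

lemma Af_zero : (Af 0).card = 1 := by
  rw [Af, Finset.filter_true_of_mem (fun t _ => mem_NSC_zero t), Finset.card_univ]
  simp

lemma Af_one : (Af 1).card = 4 := by
  rw [Af, Finset.filter_true_of_mem (fun t _ => mem_NSC_one t), Finset.card_univ]
  simp

lemma Bf_zero : (Bf 0).card = 1 := by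
  rw [Bf, Finset.filter_true_of_mem, Finset.card_univ]
  · simp
  · intro t _
    refine ⟨mem_NSC_zero t, ?_⟩
    rw [extVal_ge _ _ (by omega)]
    omega

lemma Bf_one : (Bf 1).card = 4 := by
  rw [Bf, Finset.filter_true_of_mem, Finset.card_univ]
  · simp
  · intro t _
    refine ⟨mem_NSC_one t, ?_⟩
    intro ⟨h0, h1⟩
    have e : (1:ℕ) - 1 = 1 - 2 := rfl
    rw [e] at h0
    omega

lemma Ef_zero : (Ef 0).card = 1 := by
  rw [Ef, Finset.filter_true_of_mem, Finset.card_univ]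
  · simp
  · intro t _
    refine ⟨mem_NSC_zero t, ?_⟩
    rw [extVal_ge _ _ (by omega)]
    omega

lemma filter_snoc_ne3 {k : ℕ} (a : Fin 4) (ha : (a:ℕ) ≠ 3)
    [DecidablePred (fun s : Fin k → Fin 4 => (Fin.snoc s a : Fin (k+1) → Fin 4) ∈ NSC (k+1))] :
    (univ.filter (fun s : Fin k → Fin 4 => (Fin.snoc s a : Fin (k+1) → Fin 4) ∈ NSC (k+1)))
      = Af k := by
  apply Finset.filter_congr
  intro s _
  rw [snoc_mem_NSC]
  constructor
  · exact fun h => h.1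
  · exact fun h => ⟨h, fun hh => ha hh.1⟩

lemma filter_snoc_3 {k : ℕ}
    [DecidablePred (fun s : Fin k → Fin 4 => (Fin.snoc s 3 : Fin (k+1) → Fin 4) ∈ NSC (k+1))] :
    (univ.filter (fun s : Fin k → Fin 4 => (Fin.snoc s 3 : Fin (k+1) → Fin 4) ∈ NSC (k+1)))
      = Bf k := by
  apply Finset.filter_congr
  intro s _
  rw [snoc_mem_NSC]
  constructor
  · exact fun h => ⟨h.1, fun hh => h.2 ⟨rfl, hh⟩⟩
  · exact fun h => ⟨h.1, fun hh => h.2 hh.2⟩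

lemma Af_succ (k : ℕ) : (Af (k+1)).card = 3 * (Af k).card + (Bf k).card := by
  rw [Af, card_filter_snoc (· ∈ NSC (k+1)), Fin.sum_univ_four]
  rw [filter_snoc_ne3 0 (by decide), filter_snoc_ne3 1 (by decide),
      filter_snoc_ne3 2 (by decide), filter_snoc_3]
  ring

lemma Ef_succ (k : ℕ) : (Ef (k+1)).card = 3 * (Af k).card := by
  rw [Ef, card_filter_snoc (fun t : Fin (k+1) → Fin 4 => t ∈ NSC (k+1) ∧ extVal t ((k+1)-1) ≠ 3),
      Fin.sum_univ_four]
  have key : ∀ a : Fin 4, (a:ℕ) ≠ 3 →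
      (univ.filter (fun s : Fin k → Fin 4 =>
        (Fin.snoc s a : Fin (k+1) → Fin 4) ∈ NSC (k+1)
          ∧ extVal (Fin.snoc s a : Fin (k+1) → Fin 4) ((k+1)-1) ≠ 3)) = Af k := by
    intro a ha
    apply Finset.filter_congr
    intro s _
    rw [snoc_mem_NSC]
    have hk : (k+1)-1 = k := rfl
    rw [hk, extVal_snoc, if_pos rfl]
    constructor
    · exact fun h => h.1.1
    · exact fun h => ⟨⟨h, fun hh => ha hh.1⟩, ha⟩
  have key3 : (univ.filter (fun s : Fin k → Fin 4 =>
      (Fin.snoc s (3:Fin 4) : Fin (k+1) → Fin 4) ∈ NSC (k+1)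
        ∧ extVal (Fin.snoc s (3:Fin 4) : Fin (k+1) → Fin 4) ((k+1)-1) ≠ 3)) = ∅ := by
    apply Finset.filter_false_of_mem
    intro s _
    have hk : (k+1)-1 = k := rfl
    rw [hk, extVal_snoc, if_pos rfl]
    intro h
    exact h.2 rfl
  rw [key 0 (by decide), key 1 (by decide), key 2 (by decide), key3]
  simp only [Finset.card_empty, add_zero]
  ring

lemma Af_eq_Bf_add (k : ℕ) : (Af (k+2)).card = (Bf (k+2)).card + (Bf k).card := by
  have hsplit : (Bf (k+2)).card
      + (univ.filter (fun t : Fin (k+2) → Fin 4 =>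
          t ∈ NSC (k+2) ∧ (extVal t (k+1) = 0 ∧ extVal t k = 3))).card
      = (Af (k+2)).card := by
    rw [Bf, Af]
    have e1 : (univ.filter (fun t : Fin (k+2) → Fin 4 =>
        t ∈ NSC (k+2) ∧ ¬(extVal t ((k+2)-1) = 0 ∧ extVal t ((k+2)-2) = 3)))
      = (univ.filter (fun t : Fin (k+2) → Fin 4 => t ∈ NSC (k+2))).filter
          (fun t => ¬(extVal t (k+1) = 0 ∧ extVal t k = 3)) := by
      rw [Finset.filter_filter]
      rfl
    have e2 : (univ.filter (fun t : Fin (k+2) → Fin 4 =>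
        t ∈ NSC (k+2) ∧ (extVal t (k+1) = 0 ∧ extVal t k = 3)))
      = (univ.filter (fun t : Fin (k+2) → Fin 4 => t ∈ NSC (k+2))).filter
          (fun t => (extVal t (k+1) = 0 ∧ extVal t k = 3)) := by
      rw [Finset.filter_filter]
    rw [e1, e2, add_comm]
    exact Finset.card_filter_add_card_filter_not _
  have hC : (univ.filter (fun t : Fin (k+2) → Fin 4 =>
      t ∈ NSC (k+2) ∧ (extVal t (k+1) = 0 ∧ extVal t k = 3))).card = (Bf k).card := by
    rw [card_filter_snoc (fun t : Fin (k+2) → Fin 4 =>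
      t ∈ NSC (k+2) ∧ (extVal t (k+1) = 0 ∧ extVal t k = 3)), Fin.sum_univ_four]
    have hne : ∀ a : Fin 4, (a:ℕ) ≠ 0 →
        (univ.filter (fun s : Fin (k+1) → Fin 4 =>
          (Fin.snoc s a : Fin (k+2) → Fin 4) ∈ NSC (k+2)
            ∧ (extVal (Fin.snoc s a : Fin (k+2) → Fin 4) (k+1) = 0
              ∧ extVal (Fin.snoc s a : Fin (k+2) → Fin 4) k = 3))) = ∅ := by
      intro a ha
      apply Finset.filter_false_of_mem
      intro s _
      rw [extVal_snoc, if_pos rfl]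
      intro h
      exact ha h.2.1
    have h0 : (univ.filter (fun s : Fin (k+1) → Fin 4 =>
        (Fin.snoc s (0:Fin 4) : Fin (k+2) → Fin 4) ∈ NSC (k+2)
          ∧ (extVal (Fin.snoc s (0:Fin 4) : Fin (k+2) → Fin 4) (k+1) = 0
            ∧ extVal (Fin.snoc s (0:Fin 4) : Fin (k+2) → Fin 4) k = 3)))
        = (univ.filter (fun s : Fin (k+1) → Fin 4 => s ∈ NSC (k+1) ∧ extVal s k = 3)) := by
      apply Finset.filter_congr
      intro s _
      rw [snoc_mem_NSC, extVal_snoc, extVal_snoc, if_pos rfl, if_neg (by omega)]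
      constructor
      · exact fun h => ⟨h.1.1, h.2.2⟩
      · exact fun h => ⟨⟨h.1, fun hh => absurd hh.1 (by decide)⟩, rfl, h.2⟩
    rw [hne 1 (by decide), hne 2 (by decide), hne 3 (by decide), h0]
    simp only [Finset.card_empty, add_zero, zero_add]
    rw [card_filter_snoc (fun s : Fin (k+1) → Fin 4 => s ∈ NSC (k+1) ∧ extVal s k = 3),
        Fin.sum_univ_four]
    have hne2 : ∀ a : Fin 4, (a:ℕ) ≠ 3 →
        (univ.filter (fun u : Fin k → Fin 4 =>
          (Fin.snoc u a : Fin (k+1) → Fin 4) ∈ NSC (k+1)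
            ∧ extVal (Fin.snoc u a : Fin (k+1) → Fin 4) k = 3)) = ∅ := by
      intro a ha
      apply Finset.filter_false_of_mem
      intro u _
      rw [extVal_snoc, if_pos rfl]
      intro h
      exact ha h.2
    have h3 : (univ.filter (fun u : Fin k → Fin 4 =>
        (Fin.snoc u (3:Fin 4) : Fin (k+1) → Fin 4) ∈ NSC (k+1)
          ∧ extVal (Fin.snoc u (3:Fin 4) : Fin (k+1) → Fin 4) k = 3)) = Bf k := by
      apply Finset.filter_congr
      intro u _
      rw [snoc_mem_NSC, extVal_snoc, if_pos rfl]
      constructor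
      · exact fun h => ⟨h.1.1, fun hh => h.1.2 ⟨rfl, hh⟩⟩
      · exact fun h => ⟨⟨h.1, fun hh => h.2 hh.2⟩, rfl⟩
    rw [hne2 0 (by decide), hne2 1 (by decide), hne2 2 (by decide), h3]
    simp
  omega

end NSAux

namespace NSAux

/-! ### Identification with `f` -/

lemma ABf (f : ℤ → ℚ) (hb1 : f (-1) = 1 / 3) (hb0 : f 0 = 1) (hb : f 1 = 4)
    (hrec : ∀ k : ℤ, 2 ≤ k → f k = 4 * f (k - 1) - f (k - 2) + 3 * f (k - 3)) :
    ∀ k : ℕ, ((Af k).card : ℚ) = f (k : ℤ) ∧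
      ((Bf k).card : ℚ) = f ((k : ℤ) + 1) - 3 * f (k : ℤ) := by
  have f2 : f 2 = 16 := by
    have h := hrec 2 (by norm_num)
    rw [show (2:ℤ)-1 = 1 by ring, show (2:ℤ)-2 = 0 by ring, show (2:ℤ)-3 = -1 by ring,
      hb, hb0, hb1] at h
    rw [h]; norm_num
  have key : ∀ k : ℕ,
      (((Af k).card : ℚ) = f (k : ℤ) ∧ ((Bf k).card : ℚ) = f ((k : ℤ) + 1) - 3 * f (k : ℤ))
      ∧ (((Af (k+1)).card : ℚ) = f ((k+1 : ℕ) : ℤ) ∧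
          ((Bf (k+1)).card : ℚ) = f (((k+1 : ℕ) : ℤ) + 1) - 3 * f ((k+1 : ℕ) : ℤ)) := by
    intro k
    induction k with
    | zero =>
      refine ⟨⟨?_, ?_⟩, ?_, ?_⟩
      · rw [Af_zero]; push_cast; norm_num [hb0]
      · rw [Bf_zero]; push_cast; norm_num [hb, hb0]
      · rw [Af_one]; push_cast; norm_num [hb]
      · rw [Bf_one]; push_cast; norm_num [f2, hb]
    | succ n ih =>
      obtain ⟨⟨hA0, hB0⟩, hA1, hB1⟩ := ih
      push_cast at hA1 hB1 ⊢
      have hA2 : ((Af (n+2)).card : ℚ) = f ((n:ℤ) + 2) := by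
        have h := Af_succ (n+1)
        have h' : ((Af (n+1+1)).card : ℚ) = 3 * ((Af (n+1)).card : ℚ) + ((Bf (n+1)).card : ℚ) := by
          exact_mod_cast congrArg (fun x : ℕ => (x : ℚ)) h
        have e : n+1+1 = n+2 := rfl
        rw [e] at h'
        rw [h', hA1, hB1]; ring_nf
      have hB2 : ((Bf (n+2)).card : ℚ) = f ((n:ℤ) + 3) - 3 * f ((n:ℤ) + 2) := by
        have h := Af_eq_Bf_add n
        have h' : ((Af (n+2)).card : ℚ) = ((Bf (n+2)).card : ℚ) + ((Bf n).card : ℚ) := by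
          exact_mod_cast congrArg (fun x : ℕ => (x : ℚ)) h
        have hr := hrec ((n:ℤ)+3) (by omega)
        rw [show (n:ℤ)+3-1 = (n:ℤ)+2 by ring, show (n:ℤ)+3-2 = (n:ℤ)+1 by ring,
          show (n:ℤ)+3-3 = (n:ℤ) by ring] at hr
        rw [hA2, hB0] at h'
        linarith
      refine ⟨⟨hA1, hB1⟩, ?_, ?_⟩
      · rw [show (n:ℤ)+1+1 = (n:ℤ)+2 by ring]; exact hA2
      · rw [show (n:ℤ)+1+1 = (n:ℤ)+2 by ring, show (n:ℤ)+2+1 = (n:ℤ)+3 by ring]; exact hB2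
  exact fun k => (key k).1

/-! ### The sets `Sf`, `Tf` and the map `Phi` -/

noncomputable def Sf (m : ℕ) (c : Fin m → Fin 4) (k : Fin m) : Finset (Fin m → Fin 4) :=
  univ.filter (fun w => w ∈ NSC m ∧ w k < c k ∧ ∀ j, k < j → w j = c j)

noncomputable def Tf (m : ℕ) (c : Fin m → Fin 4) (k : Fin m) (a : Fin 4) :
    Finset (Fin m → Fin 4) :=
  univ.filter (fun w => w ∈ NSC m ∧ w k = a ∧ ∀ j, k < j → w j = c j)

def Phi (m : ℕ) (c : Fin m → Fin 4) (k : Fin m) (a : Fin 4) (t : Fin (k:ℕ) → Fin 4) :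
    Fin m → Fin 4 :=
  fun j => if h : (j:ℕ) < (k:ℕ) then t ⟨(j:ℕ), h⟩ else if (j:ℕ) = (k:ℕ) then a else c j

lemma extVal_Phi (m : ℕ) (c : Fin m → Fin 4) (k : Fin m) (a : Fin 4)
    (t : Fin (k:ℕ) → Fin 4) (i : ℕ) :
    extVal (Phi m c k a t) i =
      if i < (k:ℕ) then extVal t i else if i = (k:ℕ) then (a:ℕ) else extVal c i := by
  by_cases hi : i < (k:ℕ)
  · have him : i < m := lt_trans hi k.isLt
    rw [if_pos hi, extVal_lt _ i him, extVal_lt t i hi]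
    show ((Phi m c k a t ⟨i, him⟩ : Fin 4) : ℕ) = _
    simp only [Phi]
    rw [dif_pos hi]
  · rw [if_neg hi]
    by_cases he : i = (k:ℕ)
    · have him : i < m := by rw [he]; exact k.isLt
      rw [if_pos he, extVal_lt _ i him]
      show ((Phi m c k a t ⟨i, him⟩ : Fin 4) : ℕ) = _
      simp only [Phi]
      rw [dif_neg hi, if_pos he]
    · rw [if_neg he]
      by_cases him : i < m
      · rw [extVal_lt _ i him, extVal_lt _ i him]
        show ((Phi m c k a t ⟨i, him⟩ : Fin 4) : ℕ) = _
        simp only [Phi]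
        rw [dif_neg hi, if_neg he]
      · rw [extVal_ge _ i him, extVal_ge _ i him]

lemma Phi_inj (m : ℕ) (c : Fin m → Fin 4) (k : Fin m) (a : Fin 4) :
    Function.Injective (Phi m c k a) := by
  intro t t' h
  funext i
  have h2 := congrFun h ⟨(i:ℕ), lt_trans i.isLt k.isLt⟩
  simp only [Phi] at h2
  rw [dif_pos (show ((⟨(i:ℕ), lt_trans i.isLt k.isLt⟩ : Fin m) : ℕ) < (k:ℕ) from i.isLt),
    dif_pos] at h2
  · have e : (⟨(i:ℕ), i.isLt⟩ : Fin (k:ℕ)) = i := Fin.ext rfl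
    rw [e] at h2
    exact h2
  · exact i.isLt

lemma mem_Phi {m : ℕ} {c : Fin m → Fin 4} (hc : c ∈ NSC m) (k : Fin m) (a : Fin 4)
    (ha2 : (a:ℕ) ≤ 2) (t : Fin (k:ℕ) → Fin 4) :
    Phi m c k a t ∈ NSC m ↔
      (t ∈ NSC (k:ℕ) ∧
        ¬(extVal c ((k:ℕ)+1) = 3 ∧ (a:ℕ) = 0 ∧ extVal t ((k:ℕ)-1) = 3)) := by
  rw [mem_NSC_iff_ext] at hc
  rw [mem_NSC_iff_ext, mem_NSC_iff_ext]
  constructor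
  · intro H
    constructor
    · intro i hpat
      obtain ⟨h2, h1, h0⟩ := hpat
      have hik : i + 2 < (k:ℕ) := extVal_lt_of_ne t (i+2) (by omega)
      refine H i ⟨?_, ?_, ?_⟩
      · rw [extVal_Phi, if_pos (by omega)]; exact h2
      · rw [extVal_Phi, if_pos (by omega)]; exact h1
      · rw [extVal_Phi, if_pos (by omega)]; exact h0
    · intro hpat
      obtain ⟨hc3, ha0, ht3⟩ := hpat
      have h1k : (k:ℕ) - 1 < (k:ℕ) := extVal_lt_of_ne t ((k:ℕ)-1) (by omega)
      refine H ((k:ℕ)-1) ⟨?_, ?_, ?_⟩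
      · rw [extVal_Phi, if_neg (by omega), if_neg (by omega),
          show (k:ℕ)-1+2 = (k:ℕ)+1 by omega]
        exact hc3
      · rw [extVal_Phi, if_neg (by omega), if_pos (by omega)]; exact ha0
      · rw [extVal_Phi, if_pos (by omega)]; exact ht3
  · intro H i hpat
    obtain ⟨Ht, Hb⟩ := H
    obtain ⟨h2, h1, h0⟩ := hpat
    rw [extVal_Phi] at h2 h1 h0
    rcases lt_trichotomy (i+2) (k:ℕ) with h | h | h
    · rw [if_pos (by omega)] at h2 h1 h0
      exact Ht i ⟨h2, h1, h0⟩
    · rw [if_neg (by omega), if_pos (by omega)] at h2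
      rw [if_pos (by omega)] at h1 h0
      omega
    · rcases eq_or_lt_of_le (show (k:ℕ) ≤ i + 1 by omega) with h' | h'
      · -- i + 1 = k
        rw [if_neg (by omega), if_neg (by omega)] at h2
        rw [if_neg (by omega), if_pos (by omega)] at h1
        rw [if_pos (by omega)] at h0
        refine Hb ⟨?_, h1, ?_⟩
        · rw [show (k:ℕ)+1 = i+2 by omega]; exact h2
        · rw [show (k:ℕ)-1 = i by omega]; exact h0
      · rcases eq_or_lt_of_le (show (k:ℕ) ≤ i by omega) with h'' | h''
        · rw [if_neg (by omega), if_pos (by omega)] at h0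
          omega
        · rw [if_neg (by omega), if_neg (by omega)] at h2 h1 h0
          exact hc i ⟨h2, h1, h0⟩

lemma Phi_apply_k (m : ℕ) (c : Fin m → Fin 4) (k : Fin m) (a : Fin 4)
    (t : Fin (k:ℕ) → Fin 4) : Phi m c k a t k = a := by
  simp only [Phi]
  rw [dif_neg (lt_irrefl _)]
  simp

lemma Phi_apply_gt (m : ℕ) (c : Fin m → Fin 4) (k : Fin m) (a : Fin 4)
    (t : Fin (k:ℕ) → Fin 4) (j : Fin m) (hj : k < j) : Phi m c k a t j = c j := by
  simp only [Phi]
  have hj' : (k:ℕ) < (j:ℕ) := hj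
  rw [dif_neg (by omega), if_neg (by omega)]

lemma Tf_eq_image {m : ℕ} {c : Fin m → Fin 4} (hc : c ∈ NSC m) (k : Fin m) (a : Fin 4)
    (ha : a < c k) :
    Tf m c k a = (univ.filter (fun t : Fin (k:ℕ) → Fin 4 =>
        t ∈ NSC (k:ℕ) ∧
          ¬(extVal c ((k:ℕ)+1) = 3 ∧ (a:ℕ) = 0 ∧ extVal t ((k:ℕ)-1) = 3))).image
      (Phi m c k a) := by
  have ha2 : (a:ℕ) ≤ 2 := by
    have h1 : (a:ℕ) < ((c k):ℕ) := ha
    have h2 : ((c k):ℕ) < 4 := (c k).isLt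
    omega
  ext w
  rw [Tf, Finset.mem_filter, Finset.mem_image]
  constructor
  · rintro ⟨-, hw, hwk, hwtail⟩
    set t : Fin (k:ℕ) → Fin 4 := fun i => w ⟨(i:ℕ), lt_trans i.isLt k.isLt⟩ with ht
    have hPhi : Phi m c k a t = w := by
      funext j
      simp only [Phi]
      by_cases hj : (j:ℕ) < (k:ℕ)
      · rw [dif_pos hj]
      · rw [dif_neg hj]
        by_cases hj2 : (j:ℕ) = (k:ℕ)
        · rw [if_pos hj2]
          have hjk : j = k := Fin.ext hj2
          rw [hjk, hwk]
        · rw [if_neg hj2]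
          exact (hwtail j (show (k:ℕ) < (j:ℕ) by omega)).symm
    refine ⟨t, ?_, hPhi⟩
    rw [Finset.mem_filter]
    refine ⟨Finset.mem_univ _, ?_⟩
    rw [← mem_Phi hc k a ha2 t, hPhi]
    exact hw
  · rintro ⟨t, htmem, rfl⟩
    rw [Finset.mem_filter] at htmem
    refine ⟨Finset.mem_univ _, (mem_Phi hc k a ha2 t).2 htmem.2,
      Phi_apply_k m c k a t, fun j hj => Phi_apply_gt m c k a t j hj⟩

lemma Tf_card_of {m : ℕ} {c : Fin m → Fin 4} (hc : c ∈ NSC m) (k : Fin m) (a : Fin 4)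
    (h3 : extVal c ((k:ℕ)+1) = 3) (ha0 : (a:ℕ) = 0) (ha : a < c k) :
    (Tf m c k a).card = (Ef (k:ℕ)).card := by
  rw [Tf_eq_image hc k a ha, Finset.card_image_of_injective _ (Phi_inj m c k a), Ef]
  refine congrArg Finset.card (Finset.filter_congr ?_)
  intro t _
  constructor
  · exact fun h => ⟨h.1, fun hh => h.2 ⟨h3, ha0, hh⟩⟩
  · exact fun h => ⟨h.1, fun hh => h.2 hh.2.2⟩

lemma Tf_card_not {m : ℕ} {c : Fin m → Fin 4} (hc : c ∈ NSC m) (k : Fin m) (a : Fin 4)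
    (hn : ¬(extVal c ((k:ℕ)+1) = 3 ∧ (a:ℕ) = 0)) (ha : a < c k) :
    (Tf m c k a).card = (Af (k:ℕ)).card := by
  rw [Tf_eq_image hc k a ha, Finset.card_image_of_injective _ (Phi_inj m c k a), Af]
  refine congrArg Finset.card (Finset.filter_congr ?_)
  intro t _
  constructor
  · exact fun h => h.1
  · exact fun h => ⟨h, fun hh => hn ⟨hh.1, hh.2.1⟩⟩

/-! ### Decomposition of the lexicographic index -/

lemma Sf_card {m : ℕ} (c : Fin m → Fin 4) (k : Fin m) :
    (Sf m c k).card = ∑ a ∈ univ.filter (· < c k), (Tf m c k a).card := by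
  have hbu : Sf m c k = (univ.filter (· < c k)).biUnion (fun a => Tf m c k a) := by
    ext w
    rw [Finset.mem_biUnion, Sf, Finset.mem_filter]
    constructor
    · rintro ⟨-, hN, hlt, htail⟩
      exact ⟨w k, Finset.mem_filter.2 ⟨Finset.mem_univ _, hlt⟩,
        Finset.mem_filter.2 ⟨Finset.mem_univ _, hN, rfl, htail⟩⟩
    · rintro ⟨aa, hamem, hw⟩
      rw [Finset.mem_filter] at hamem
      rw [Tf, Finset.mem_filter] at hw
      exact ⟨Finset.mem_univ _, hw.2.1, hw.2.2.1 ▸ hamem.2, hw.2.2.2⟩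
  rw [hbu]
  apply Finset.card_biUnion
  intro a1 _ a2 _ hne
  rw [Function.onFun, Finset.disjoint_left]
  intro w hw1 hw2
  rw [Tf, Finset.mem_filter] at hw1 hw2
  exact hne (hw1.2.2.1 ▸ hw2.2.2.1 ▸ rfl)

lemma lexIndex_eq {m : ℕ} (c : Fin m → Fin 4) :
    lexIndex (NSC m) c = ∑ k : Fin m, (Sf m c k).card := by
  have h1 : {w ∈ NSC m | wordLT w c}
      = ↑(univ.biUnion (fun k : Fin m => Sf m c k)) := by
    ext w
    rw [Set.mem_sep_iff, Finset.mem_coe, Finset.mem_biUnion]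
    constructor
    · rintro ⟨hN, k, hk1, hk2⟩
      exact ⟨k, Finset.mem_univ _,
        Finset.mem_filter.2 ⟨Finset.mem_univ _, hN, hk1, hk2⟩⟩
    · rintro ⟨k, -, hw⟩
      rw [Sf, Finset.mem_filter] at hw
      exact ⟨hw.2.1, k, hw.2.2.1, hw.2.2.2⟩
  rw [lexIndex, h1, Set.ncard_coe_finset]
  apply Finset.card_biUnion
  have key : ∀ k1 k2 : Fin m, k1 < k2 → Disjoint (Sf m c k1) (Sf m c k2) := by
    intro k1 k2 hlt
    rw [Finset.disjoint_left]
    intro w hw1 hw2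
    rw [Sf, Finset.mem_filter] at hw1 hw2
    have he := hw1.2.2.2 k2 hlt
    have hl := hw2.2.2.1
    rw [he] at hl
    exact absurd hl (lt_irrefl _)
  intro k1 _ k2 _ hne
  rcases lt_or_gt_of_ne hne with h | h
  · exact key _ _ h
  · exact (key _ _ h).symm

/-! ### Small `Fin 4` sum helpers -/

lemma fin4_sumA (v : Fin 4) (Y : ℚ) :
    (if (0:Fin 4) < v then Y else 0) + (if (1:Fin 4) < v then Y else 0)
      + (if (2:Fin 4) < v then Y else 0) + (if (3:Fin 4) < v then Y else 0)
      = ((v:ℕ):ℚ) * Y := by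
  fin_cases v <;>
    simp [Fin.lt_def, show ((0:Fin 4):ℕ) = 0 from rfl, show ((1:Fin 4):ℕ) = 1 from rfl,
      show ((2:Fin 4):ℕ) = 2 from rfl, show ((3:Fin 4):ℕ) = 3 from rfl] <;> ring

lemma fin4_sumB (v : Fin 4) (hv : v ≠ 0) (X Y : ℚ) :
    (if (0:Fin 4) < v then X else 0) + (if (1:Fin 4) < v then Y else 0)
      + (if (2:Fin 4) < v then Y else 0) + (if (3:Fin 4) < v then Y else 0)
      = X + (((v:ℕ):ℚ) - 1) * Y := by
  fin_cases v
  · exact absurd rfl hv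
  all_goals
    simp [Fin.lt_def, show ((0:Fin 4):ℕ) = 0 from rfl, show ((1:Fin 4):ℕ) = 1 from rfl,
      show ((2:Fin 4):ℕ) = 2 from rfl, show ((3:Fin 4):ℕ) = 3 from rfl]
  all_goals ring

end NSAux

namespace NSAux

lemma per_k {m : ℕ} {c : Fin m → Fin 4} (hc : c ∈ NSC m) (f : ℤ → ℚ)
    (hAf : ∀ n : ℕ, ((Af n).card : ℚ) = f (n:ℤ))
    (hEf : ∀ n : ℕ, ((Ef n).card : ℚ) = 3 * f ((n:ℤ) - 1))
    (k : Fin m) :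
    ((Sf m c k).card : ℚ) =
      (((c k : ℕ) : ℚ) - nsY1 c (k:ℕ)) * f (((k:ℕ) : ℕ) : ℤ)
        + 3 * nsY1 c (k:ℕ) * f ((((k:ℕ) : ℕ) : ℤ) - 1) := by
  have hex : extVal c (k:ℕ) = (c k : ℕ) := by
    rw [extVal_lt c _ k.isLt]
  have hsum : ((Sf m c k).card : ℚ)
      = ∑ a ∈ univ.filter (· < c k), ((Tf m c k a).card : ℚ) := by
    rw [Sf_card]; push_cast; rfl
  rw [hsum]
  have hT : ∀ a ∈ univ.filter (· < c k), ((Tf m c k a).card : ℚ)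
      = if extVal c ((k:ℕ)+1) = 3 ∧ (a:ℕ) = 0
          then 3 * f (((k:ℕ):ℤ)-1) else f ((k:ℕ):ℤ) := by
    intro a hmem
    have ha : a < c k := (Finset.mem_filter.1 hmem).2
    by_cases hcase : extVal c ((k:ℕ)+1) = 3 ∧ (a:ℕ) = 0
    · rw [if_pos hcase, Tf_card_of hc k a hcase.1 hcase.2 ha, hEf]
    · rw [if_neg hcase, Tf_card_not hc k a hcase ha, hAf]
  rw [Finset.sum_congr rfl hT, Finset.sum_filter, Fin.sum_univ_four]
  set X : ℚ := 3 * f (((k:ℕ):ℤ)-1) with hX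
  set Y : ℚ := f ((k:ℕ):ℤ) with hY
  by_cases h3 : extVal c ((k:ℕ)+1) = 3
  · have hklt : (k:ℕ)+1 < m := extVal_lt_of_ne c ((k:ℕ)+1) (by rw [h3]; omega)
    have e0 : (if extVal c ((k:ℕ)+1) = 3 ∧ (((0:Fin 4)):ℕ) = 0 then X else Y) = X :=
      if_pos ⟨h3, rfl⟩
    have e1 : (if extVal c ((k:ℕ)+1) = 3 ∧ (((1:Fin 4)):ℕ) = 0 then X else Y) = Y :=
      if_neg (fun h => absurd h.2 (by decide))
    have e2 : (if extVal c ((k:ℕ)+1) = 3 ∧ (((2:Fin 4)):ℕ) = 0 then X else Y) = Y :=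
      if_neg (fun h => absurd h.2 (by decide))
    have e3 : (if extVal c ((k:ℕ)+1) = 3 ∧ (((3:Fin 4)):ℕ) = 0 then X else Y) = Y :=
      if_neg (fun h => absurd h.2 (by decide))
    rw [e0, e1, e2, e3]
    by_cases hv : c k = 0
    · have hy : nsY1 c (k:ℕ) = 0 := by
        rw [nsY1, if_neg]
        intro h
        rw [hex, hv] at h
        exact absurd h.2.2 (by decide)
      rw [hy, hv]
      rw [if_neg (show ¬ (0:Fin 4) < 0 by decide), if_neg (show ¬ (1:Fin 4) < 0 by decide),
        if_neg (show ¬ (2:Fin 4) < 0 by decide), if_neg (show ¬ (3:Fin 4) < 0 by decide)]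
      norm_num [show ((0:Fin 4):ℕ) = 0 from rfl]
    · have hy : nsY1 c (k:ℕ) = 1 := by
        rw [nsY1, if_pos]
        refine ⟨hklt, h3, ?_⟩
        rw [hex]
        have h0 : (c k : ℕ) ≠ 0 := fun h => hv (Fin.ext h)
        have h4 : (c k : ℕ) < 4 := (c k).isLt
        simp only [Finset.mem_insert, Finset.mem_singleton]
        omega
      rw [hy, fin4_sumB (c k) hv]
      ring
  · have e0 : ∀ a : Fin 4,
        (if extVal c ((k:ℕ)+1) = 3 ∧ ((a:Fin 4):ℕ) = 0 then X else Y) = Y :=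
      fun a => if_neg (fun h => h3 h.1)
    have hy : nsY1 c (k:ℕ) = 0 := by
      rw [nsY1, if_neg (fun h => h3 h.2.1)]
    rw [e0 0, e0 1, e0 2, e0 3, hy, fin4_sumA]
    ring

end NSAux

theorem stmt15 (m : ℕ) (hm : 1 ≤ m) (f : ℤ → ℚ)
    (hb1 : f (-1) = 1 / 3) (hb0 : f 0 = 1) (hb : f 1 = 4)
    (hrec : ∀ k : ℤ, 2 ≤ k → f k = 4 * f (k - 1) - f (k - 2) + 3 * f (k - 3))
    (c : Fin m → Fin 4) (hc : c ∈ NSC m) :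
    (lexIndex (NSC m) c : ℚ) =
      ∑ i : Fin m,
        ((((c i : ℕ) : ℚ) - nsY1 c (i : ℕ)) * f ((i : ℕ) : ℤ)
          + 3 * nsY1 c (i : ℕ) * f (((i : ℕ) : ℤ) - 1)) := by
  have hAB := NSAux.ABf f hb1 hb0 hb hrec
  have hAf : ∀ n : ℕ, ((NSAux.Af n).card : ℚ) = f (n:ℤ) := fun n => (hAB n).1
  have hEf : ∀ n : ℕ, ((NSAux.Ef n).card : ℚ) = 3 * f ((n:ℤ) - 1) := by
    intro n
    cases n with
    | zero =>
      rw [NSAux.Ef_zero, show ((0:ℕ):ℤ) - 1 = -1 by norm_num, hb1]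
      norm_num
    | succ p =>
      have h := NSAux.Ef_succ p
      have h' : ((NSAux.Ef (p+1)).card : ℚ) = 3 * ((NSAux.Af p).card : ℚ) := by
        exact_mod_cast congrArg (fun x : ℕ => (x:ℚ)) h
      rw [h', hAf, show ((p+1:ℕ):ℤ) - 1 = (p:ℤ) by push_cast; ring]
  rw [NSAux.lexIndex_eq c]
  push_cast
  exact Finset.sum_congr rfl fun k _ => NSAux.per_k hc f hAf hEf k
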